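/- Let G be a finite subset of ℤ² equipped with the c₁-adjacency, and suppose G carries a group structure making it a digital topological group, and that the graph (G, c₁) is connected. Then either G has at most 2 points, or G is a digital simple closed curve: G = {x₀, x₁, …, x_{n−1}} for some n ≥ 3 with the x_i distinct and x_i c₁-adjacent to x_j if and only if j ≡ i ± 1 (mod n). -/

import Mathlib

/-- A function between digital images is digitally continuous if adjacent points map
to adjacent or equal points. -/
def DigCont {α β : Type*} (adjA : α → α → Prop) (adjB : β → β → Prop) (f : α → β) : Prop :=
  ∀ x y, adjA x y → adjB (f x) (f y) ∨ f x = f y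

/-- NP₁ product adjacency: equal in one coordinate and adjacent in the other. -/
def NP1adj {α β : Type*} (κ : α → α → Prop) (lam : β → β → Prop) :
    α × β → α × β → Prop :=
  fun p q => (p.1 = q.1 ∧ lam p.2 q.2) ∨ (κ p.1 q.1 ∧ p.2 = q.2)

/-- NP₂ product adjacency: distinct, and adjacent-or-equal in each coordinate. -/
def NP2adj {α β : Type*} (κ : α → α → Prop) (lam : β → β → Prop) :
    α × β → α × β → Prop :=
  fun p q => p ≠ q ∧ (κ p.1 q.1 ∨ p.1 = q.1) ∧ (lam p.2 q.2 ∨ p.2 = q.2)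

/-- The NP_i product adjacency, i ∈ {1,2}. -/
def NPadj (i : ℕ) {α β : Type*} (κ : α → α → Prop) (lam : β → β → Prop) :
    α × β → α × β → Prop :=
  if i = 1 then NP1adj κ lam else NP2adj κ lam

/-- An NP_i-digital topological group: a group with an irreflexive symmetric adjacency
such that multiplication is (NP_i, adj)-continuous and inversion is continuous. -/
def IsNPiDTG (i : ℕ) {G : Type*} [Group G] (adj : G → G → Prop) : Prop :=
  Irreflexive adj ∧ Symmetric adj ∧
    DigCont (NPadj i adj adj) adj (fun p : G × G => p.1 * p.2) ∧
    DigCont adj adj (fun x : G => x⁻¹)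

/-- A digital topological group: an NP_i-digital topological group for some i ∈ {1,2}. -/
def IsDTG {G : Type*} [Group G] (adj : G → G → Prop) : Prop :=
  ∃ i ∈ ({1, 2} : Set ℕ), IsNPiDTG i adj

/-- A digital isomorphism of a digital image to itself: a bijection preserving and
reflecting adjacency. -/
def DigIso {α : Type*} (adj : α → α → Prop) (f : α → α) : Prop :=
  Function.Bijective f ∧ ∀ x y, adj x y ↔ adj (f x) (f y)

/-- c₁-adjacency in ℤ²: distinct points at L¹-distance 1. -/
def c1 (x y : ℤ × ℤ) : Prop := |x.1 - y.1| + |x.2 - y.2| = 1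


lemma cycle_of_two_regular {V : Type*} [Fintype V] (adj : V → V → Prop)
    (hirr : Irreflexive adj) (hsym : Symmetric adj)
    (hconn : ∀ a b : V, Relation.ReflTransGen adj a b)
    (v0 : V)
    (hdeg : ∀ v : V, ∃ a b : V, a ≠ b ∧ ∀ u, adj v u ↔ u = a ∨ u = b) :
    ∃ n : ℕ, 3 ≤ n ∧ ∃ x : ZMod n → V, Function.Bijective x ∧
      ∀ i j : ZMod n, adj (x i) (x j) ↔ (j = i + 1 ∨ j = i - 1) := by
  classical
  choose A B hAB hN using hdeg
  set next : V → V → V := fun p c => if p = A c then B c else A c with hnext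
  have n1 : ∀ p c, adj c (next p c) := by
    intro p c
    by_cases h : p = A c
    · simp only [hnext, if_pos h]
      exact (hN c (B c)).2 (Or.inr rfl)
    · simp only [hnext, if_neg h]
      exact (hN c (A c)).2 (Or.inl rfl)
  have n2 : ∀ p c, next p c ≠ p := by
    intro p c
    by_cases h : p = A c
    · simp only [hnext, if_pos h]
      rw [h]; exact (hAB c).symm
    · simp only [hnext, if_neg h]
      exact fun h' => h h'.symm
  set h : ℕ → V × V := fun n => Nat.rec (v0, A v0) (fun _ pc => (pc.2, next pc.1 pc.2)) n with hh
  set g : ℕ → V := fun n => (h n).1 with hg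
  have hg2 : ∀ n, g (n+2) = next (g n) (g (n+1)) := fun n => rfl
  have I1 : ∀ k, adj (g k) (g (k+1)) := by
    intro k
    match k with
    | 0 => exact (hN v0 (A v0)).2 (Or.inl rfl)
    | Nat.succ k => exact n1 (g k) (g (k+1))
  have I2 : ∀ k, g (k+2) ≠ g k := by
    intro k
    rw [hg2]
    exact n2 (g k) (g (k+1))
  obtain ⟨a, b, hab, heq⟩ := Finite.exists_ne_map_eq_of_infinite g
  have hP : ∃ mm, ∃ i, i < mm ∧ g i = g mm := by
    rcases hab.lt_or_gt with hl | hl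
    · exact ⟨b, a, hl, heq⟩
    · exact ⟨a, b, hl, heq.symm⟩
  obtain ⟨m, hspec, inj⟩ :
      ∃ m, (∃ i, i < m ∧ g i = g m) ∧ ∀ a b, a < b → b < m → g a ≠ g b := by
    refine ⟨Nat.find hP, Nat.find_spec hP, ?_⟩
    intro a b hab2 hbm hgab
    exact Nat.find_min hP hbm ⟨a, hab2, hgab⟩
  obtain ⟨i, him, hgi⟩ := hspec
  -- helper
  have two_mem : ∀ (Aa Bb x y z : V), x ≠ y → (x = Aa ∨ x = Bb) → (y = Aa ∨ y = Bb) →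
      (z = Aa ∨ z = Bb) → z = x ∨ z = y := by
    intro Aa Bb x y z hxy hx hy hz
    rcases hx with rfl | rfl <;> rcases hy with rfl | rfl <;> rcases hz with rfl | rfl <;> tauto
  have hi0 : i = 0 := by
    by_contra h0
    obtain ⟨i', rfl⟩ : ∃ i', i = i' + 1 := ⟨i - 1, by omega⟩
    obtain ⟨m', rfl⟩ : ∃ m', m = m' + 1 := ⟨m - 1, by omega⟩
    have hmadj : adj (g m') (g (i'+1)) := by
      have := I1 m'
      rwa [← hgi] at this
    have memM : g m' = A (g (i'+1)) ∨ g m' = B (g (i'+1)) :=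
      (hN (g (i'+1)) (g m')).1 (hsym hmadj)
    have memX1 : g i' = A (g (i'+1)) ∨ g i' = B (g (i'+1)) :=
      (hN (g (i'+1)) (g i')).1 (hsym (I1 i'))
    have memX2 : g (i'+2) = A (g (i'+1)) ∨ g (i'+2) = B (g (i'+1)) :=
      (hN (g (i'+1)) (g (i'+2))).1 (I1 (i'+1))
    have hx12 : g i' ≠ g (i'+2) := fun h' => I2 i' h'.symm
    rcases two_mem _ _ _ _ _ hx12 memX1 memX2 memM with hc | hc
    · exact inj i' m' (by omega) (by omega) hc.symm
    · rcases lt_trichotomy (i'+2) m' with hlt | heq2 | hgt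
      · exact inj (i'+2) m' hlt (by omega) hc.symm
      · subst heq2
        exact I2 (i'+1) hgi.symm
      · have hm' : m' = i' + 1 := by omega
        subst hm'
        have := I1 (i'+1)
        rw [← hgi] at this
        exact hirr _ this
  subst hi0
  have hm3 : 3 ≤ m := by
    have h1 : m ≠ 1 := by
      rintro rfl
      have h1' : adj (g 0) (g 1) := I1 0
      rw [hgi] at h1'
      exact hirr _ h1'
    have h2 : m ≠ 2 := by
      rintro rfl
      exact I2 0 hgi.symm
    omega
  have hm0 : 0 < m := by omega
  have kp_eq : ∀ k, k < m → (k+1) % m = if k+1 = m then 0 else k+1 := by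
    intro k hk
    split_ifs with hcase
    · rw [hcase, Nat.mod_self]
    · exact Nat.mod_eq_of_lt (by omega)
  have km_eq : ∀ k, k < m → (k + (m-1)) % m = if k = 0 then m-1 else k-1 := by
    intro k hk
    split_ifs with hcase
    · subst hcase
      simp only [Nat.zero_add]
      exact Nat.mod_eq_of_lt (by omega : m - 1 < m)
    · rw [show k + (m-1) = (k-1) + m by omega, Nat.add_mod_right]
      exact Nat.mod_eq_of_lt (by omega)
  have adj_kp : ∀ k, k < m → adj (g k) (g ((k+1) % m)) := by
    intro k hk
    rw [kp_eq k hk]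
    split_ifs with hcase
    · have := I1 k
      rw [hcase, ← hgi] at this
      exact this
    · exact I1 k
  have adj_km : ∀ k, k < m → adj (g k) (g ((k + (m-1)) % m)) := by
    intro k hk
    rw [km_eq k hk]
    split_ifs with hcase
    · subst hcase
      have h1 : adj (g (m-1)) (g ((m-1)+1)) := I1 (m-1)
      rw [show (m-1)+1 = m by omega] at h1
      rw [hgi]
      exact hsym h1
    · have h1 := I1 (k-1)
      rw [show (k-1)+1 = k by omega] at h1
      exact hsym h1
  have hkpkm : ∀ k, k < m → (k+1) % m ≠ (k + (m-1)) % m := by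
    intro k hk
    rw [kp_eq k hk, km_eq k hk]
    split_ifs <;> omega
  have injne : ∀ a b, a < m → b < m → a ≠ b → g a ≠ g b := by
    intro a b ha hb hne
    rcases hne.lt_or_gt with hl | hl
    · exact inj a b hl hb
    · exact fun h' => inj b a hl ha h'.symm
  have NBR : ∀ k, k < m → ∀ u, adj (g k) u ↔ (u = g ((k+1) % m) ∨ u = g ((k + (m-1)) % m)) := by
    intro k hk u
    have h1 := adj_kp k hk
    have h2 := adj_km k hk
    have hd : g ((k+1)%m) ≠ g ((k+(m-1))%m) :=
      injne _ _ (Nat.mod_lt _ hm0) (Nat.mod_lt _ hm0) (hkpkm k hk)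
    constructor
    · intro hadj
      have hmem := (hN (g k) u).1 hadj
      have m1 := (hN (g k) _).1 h1
      have m2 := (hN (g k) _).1 h2
      exact two_mem _ _ _ _ _ hd m1 m2 hmem
    · rintro (rfl | rfl)
      · exact h1
      · exact h2
  have reach : ∀ v, ∃ k, k < m ∧ g k = v := by
    intro v
    have hr := hconn (g 0) v
    induction hr with
    | refl => exact ⟨0, by omega, rfl⟩
    | tail hab2 hbc ih =>
      obtain ⟨k, hk, rfl⟩ := ih
      rcases (NBR k hk _).1 hbc with hc | hc
      · exact ⟨(k+1) % m, Nat.mod_lt _ hm0, hc.symm⟩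
      · exact ⟨(k+(m-1)) % m, Nat.mod_lt _ hm0, hc.symm⟩
  haveI : NeZero m := ⟨by omega⟩
  haveI : Fact (1 < m) := ⟨by omega⟩
  refine ⟨m, hm3, fun z => g z.val, ⟨?_, ?_⟩, ?_⟩
  · intro z1 z2 hz
    apply ZMod.val_injective
    by_contra hne
    exact injne _ _ (ZMod.val_lt z1) (ZMod.val_lt z2) hne hz
  · intro v
    obtain ⟨k, hk, hv⟩ := reach v
    refine ⟨(k : ZMod m), ?_⟩
    show g ((k : ZMod m)).val = v
    rw [ZMod.val_natCast, Nat.mod_eq_of_lt hk]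
    exact hv
  · intro i j
    have hiv := ZMod.val_lt i
    have hplus : ((i+1 : ZMod m)).val = (i.val + 1) % m := by
      rw [ZMod.val_add, ZMod.val_one]
    have hminus : ((i-1 : ZMod m)).val = (i.val + (m-1)) % m := by
      have hc1 : ((m-1:ℕ) : ZMod m) = -1 := by
        rw [Nat.cast_sub (by omega : 1 ≤ m)]
        simp [ZMod.natCast_self]
      have h1 : (i - 1 : ZMod m) = i + ((m-1 : ℕ) : ZMod m) := by
        rw [hc1]; ring
      rw [h1, ZMod.val_add, ZMod.val_natCast, Nat.mod_eq_of_lt (by omega : m-1 < m)]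
    show adj (g i.val) (g j.val) ↔ _
    rw [NBR i.val hiv (g j.val)]
    have hval : ∀ w : ZMod m, ∀ k, k < m → (g w.val = g k ↔ w.val = k) := by
      intro w k hk
      constructor
      · intro hh
        by_contra hne
        exact injne _ _ (ZMod.val_lt w) hk hne hh
      · intro hh; rw [hh]
    rw [← hplus, ← hminus,
        hval j _ (ZMod.val_lt (i+1)), hval j _ (ZMod.val_lt (i-1))]
    constructor
    · rintro (hh | hh)
      · exact Or.inl (ZMod.val_injective _ hh)
      · exact Or.inr (ZMod.val_injective _ hh)
    · rintro (rfl | rfl)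
      · exact Or.inl rfl
      · exact Or.inr rfl


lemma c1_cases {x y : ℤ × ℤ} (h : c1 x y) :
    (y.1 = x.1 + 1 ∧ y.2 = x.2) ∨ (y.1 = x.1 - 1 ∧ y.2 = x.2) ∨
    (y.1 = x.1 ∧ y.2 = x.2 + 1) ∨ (y.1 = x.1 ∧ y.2 = x.2 - 1) := by
  unfold c1 at h
  rcases abs_cases (x.1 - y.1) with ⟨e1, _⟩ | ⟨e1, _⟩ <;>
    rcases abs_cases (x.2 - y.2) with ⟨e2, _⟩ | ⟨e2, _⟩ <;>
      rw [e1, e2] at h <;> omega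

lemma pigeon3 {X Y : Type*} {f : X → Y} (hf : Function.Injective f) {A B : Y} {a b c : X}
    (ha : f a = A ∨ f a = B) (hb : f b = A ∨ f b = B) (hc : f c = A ∨ f c = B) :
    a = b ∨ a = c ∨ b = c := by
  rcases ha with h|h <;> rcases hb with h'|h' <;> rcases hc with h''|h''
  · exact Or.inl (hf (h.trans h'.symm))
  · exact Or.inl (hf (h.trans h'.symm))
  · exact Or.inr (Or.inl (hf (h.trans h''.symm)))
  · exact Or.inr (Or.inr (hf (h'.trans h''.symm)))
  · exact Or.inr (Or.inr (hf (h'.trans h''.symm)))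
  · exact Or.inr (Or.inl (hf (h.trans h''.symm)))
  · exact Or.inl (hf (h.trans h'.symm))
  · exact Or.inl (hf (h.trans h'.symm))

/-- A connected digital topological group in (ℤ², c₁) has at most 2 points
or is a digital simple closed curve. -/
theorem stmt5 (G : Set (ℤ × ℤ)) [Fintype G] [Group G]
    (hG : IsDTG (fun a b : G => c1 a.val b.val))
    (hconn : ∀ a b : G, Relation.ReflTransGen (fun a b : G => c1 a.val b.val) a b) :
    Fintype.card G ≤ 2 ∨
      ∃ n : ℕ, 3 ≤ n ∧ ∃ x : ZMod n → G, Function.Bijective x ∧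
        ∀ i j : ZMod n, c1 (x i).val (x j).val ↔ (j = i + 1 ∨ j = i - 1) := by
  classical
  by_cases hcard : Fintype.card G ≤ 2
  · exact Or.inl hcard
  right
  push_neg at hcard
  obtain ⟨ii, hii, hirr, hsym, hmul, hinv⟩ := hG
  -- translations preserve adjacency
  have trans : ∀ gg a b : G, c1 a.val b.val → c1 ((gg*a : G)).val ((gg*b : G)).val := by
    intro gg a b hab
    have hne : a ≠ b := by rintro rfl; exact hirr a hab
    have key : NPadj ii (fun a b : G => c1 a.val b.val) (fun a b : G => c1 a.val b.val)
        (gg, a) (gg, b) := by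
      simp only [Set.mem_insert_iff, Set.mem_singleton_iff] at hii
      rcases hii with rfl | rfl
      · unfold NPadj
        rw [if_pos rfl]
        exact Or.inl ⟨rfl, hab⟩
      · unfold NPadj
        rw [if_neg (by norm_num)]
        exact ⟨fun h => hne (congrArg Prod.snd h), Or.inr rfl, Or.inl hab⟩
    rcases hmul (gg, a) (gg, b) key with h | h
    · exact h
    · exact absurd (mul_left_cancel h) hne
  -- extreme point
  have hne0 : (Finset.univ : Finset G).Nonempty := ⟨1, Finset.mem_univ 1⟩
  obtain ⟨p, -, hp⟩ := Finset.exists_max_image Finset.univ (fun v : G => toLex v.val) hne0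
  have hpn : ∀ q : G, c1 p.val q.val →
      q.val = (p.val.1 - 1, p.val.2) ∨ q.val = (p.val.1, p.val.2 - 1) := by
    intro q hq
    have h1 := hp q (Finset.mem_univ q)
    rw [Prod.Lex.le_iff, ofLex_toLex, ofLex_toLex] at h1
    rcases c1_cases hq with ⟨e1,e2⟩|⟨e1,e2⟩|⟨e1,e2⟩|⟨e1,e2⟩
    · exfalso; rcases h1 with h1 | ⟨h1, h1'⟩ <;> omega
    · exact Or.inl (Prod.ext_iff.mpr ⟨e1, e2⟩)
    · exfalso; rcases h1 with h1 | ⟨h1, h1'⟩ <;> omega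
    · exact Or.inr (Prod.ext_iff.mpr ⟨e1, e2⟩)
  have atMostTwoP : ∀ a b c : G, c1 p.val a.val → c1 p.val b.val → c1 p.val c.val →
      a = b ∨ a = c ∨ b = c := by
    intro a b c ha hb hc
    exact pigeon3 Subtype.val_injective (hpn a ha) (hpn b hb) (hpn c hc)
  have atMostTwo : ∀ v a b c : G, c1 v.val a.val → c1 v.val b.val → c1 v.val c.val →
      a = b ∨ a = c ∨ b = c := by
    intro v a b c ha hb hc
    have key : ∀ u : G, c1 v.val u.val → c1 p.val ((p * v⁻¹ * u : G)).val := by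
      intro u hu
      have h2 := trans (p * v⁻¹) v u hu
      rwa [show (p * v⁻¹ * v : G) = p by group] at h2
    rcases atMostTwoP _ _ _ (key a ha) (key b hb) (key c hc) with h|h|h
    · exact Or.inl (mul_left_cancel h)
    · exact Or.inr (Or.inl (mul_left_cancel h))
    · exact Or.inr (Or.inr (mul_left_cancel h))
  -- the identity has a neighbor
  obtain ⟨z, hz⟩ := Fintype.exists_ne_of_one_lt_card (by omega) (1 : G)
  obtain ⟨s, hs⟩ : ∃ s : G, c1 (1:G).val s.val := by
    rcases (hconn 1 z).cases_head with h | ⟨c, hc, -⟩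
    · exact absurd h.symm hz
    · exact ⟨c, hc⟩
  -- and a second one
  obtain ⟨t, ht, hts⟩ : ∃ t : G, c1 (1:G).val t.val ∧ t ≠ s := by
    by_contra hno
    push_neg at hno
    have huniq : ∀ v u : G, c1 v.val u.val → u = v * s := by
      intro v u hu
      have h2 := trans v⁻¹ v u hu
      rw [show (v⁻¹ * v : G) = 1 by group] at h2
      rw [← hno _ h2]
      group
    have hss : (1:G) = s * s := huniq s 1 (hsym hs)
    obtain ⟨w, hw1, hws⟩ : ∃ w : G, w ≠ 1 ∧ w ≠ s := by
      by_contra hcon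
      push_neg at hcon
      have hsub : (Finset.univ : Finset G) ⊆ {1, s} := by
        intro x _
        simp only [Finset.mem_insert, Finset.mem_singleton]
        rcases eq_or_ne x 1 with h|h
        · exact Or.inl h
        · exact Or.inr (hcon x h)
      have h3 := Finset.card_le_card hsub
      rw [Finset.card_univ] at h3
      have h4 : ({1, s} : Finset G).card ≤ 2 :=
        (Finset.card_insert_le _ _).trans (by simp)
      omega
    have hclosed : ∀ v : G,
        Relation.ReflTransGen (fun a b : G => c1 a.val b.val) 1 v → v = 1 ∨ v = s := by
      intro v h
      induction h with
      | refl => exact Or.inl rfl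
      | tail hab hbc ih =>
        rcases ih with rfl | rfl
        · exact Or.inr (by simpa using huniq _ _ hbc)
        · exact Or.inl (by rw [huniq _ _ hbc, ← hss])
    rcases hclosed w (hconn 1 w) with h|h
    · exact hw1 h
    · exact hws h
  -- every vertex has exactly two neighbors
  have hdeg : ∀ v : G, ∃ a b : G, a ≠ b ∧ ∀ u, c1 v.val u.val ↔ u = a ∨ u = b := by
    intro v
    have hvs : c1 v.val ((v * s : G)).val := by
      have h2 := trans v 1 s hs
      rwa [mul_one] at h2
    have hvt : c1 v.val ((v * t : G)).val := by
      have h2 := trans v 1 t ht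
      rwa [mul_one] at h2
    refine ⟨v * s, v * t, fun h => hts (mul_left_cancel h).symm, fun u => ⟨?_, ?_⟩⟩
    · intro hu
      rcases atMostTwo v u (v*s) (v*t) hu hvs hvt with h|h|h
      · exact Or.inl h
      · exact Or.inr h
      · exact absurd (mul_left_cancel h) (fun h' => hts h'.symm)
    · rintro (rfl | rfl)
      · exact hvs
      · exact hvt
  exact cycle_of_two_regular (fun a b : G => c1 a.val b.val) hirr hsym hconn 1 hdeg
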